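/- UI vanishes iff Blackwell degradation: for a joint distribution P of (S,Y,Z) with P_S of full support, min_{Q ∈ Δ_P} I_Q(S;Y|Z) = 0 if and only if there exists a channel λ : Z → P(Y) such that P_{Y|S=s}(y) = Σ_z λ_z(y) P_{Z|S=s}(z) for all s, y (i.e., Y is a degradation of Z with respect to S). -/

import Mathlib

open Finset Real

section Defs
variable {α β γ : Type*} [Fintype α] [Fintype β] [Fintype γ]

/-- `p` is a probability distribution on a finite type. -/
def IsDist (p : α → ℝ) : Prop := (∀ a, 0 ≤ p a) ∧ ∑ a, p a = 1

/-- `k` is a channel (stochastic matrix): each row is a distribution. -/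
def IsChannel (k : α → β → ℝ) : Prop := ∀ a, IsDist (k a)

/-- Kullback–Leibler divergence (base 2) between distributions on a finite type. -/
noncomputable def klDiv2 (p q : α → ℝ) : ℝ := ∑ a, p a * Real.logb 2 (p a / q a)

/-- Channel composition: `(chComp lam mu) a c = ∑ b, lam b c * mu a b`. -/
def chComp (lam : β → γ → ℝ) (mu : α → β → ℝ) : α → γ → ℝ :=
  fun a c => ∑ b, lam b c * mu a b

/-- Conditional (weighted) KL divergence `D(k ∥ k' | pi)`. -/
noncomputable def condKL (pi : α → ℝ) (k k' : α → β → ℝ) : ℝ :=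
  ∑ a, pi a * klDiv2 (k a) (k' a)

/-- Weighted output deficiency `δ_o^π(μ,κ) = inf_λ D(κ ∥ λ∘μ | π)`. -/
noncomputable def defOut (pi : α → ℝ) (mu : α → γ → ℝ) (kap : α → β → ℝ) : ℝ :=
  sInf {d | ∃ lam : γ → β → ℝ, IsChannel lam ∧ d = condKL pi kap (chComp lam mu)}

/-- Risk of a fixed strategy `rho` used after observing through channel `nu`. -/
noncomputable def riskWith {S O A : Type*} [Fintype S] [Fintype O] [Fintype A]
    (pi : S → ℝ) (nu : S → O → ℝ) (rho : O → A → ℝ) (l : S → A → ℝ) : ℝ :=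
  ∑ s, pi s * ∑ a, chComp rho nu s a * l s a

/-- Optimal Bayes risk `R(π,ν,ℓ)`. -/
noncomputable def bayesRisk {S O A : Type*} [Fintype S] [Fintype O] [Fintype A]
    (pi : S → ℝ) (nu : S → O → ℝ) (l : S → A → ℝ) : ℝ :=
  sInf {r | ∃ rho : O → A → ℝ, IsChannel rho ∧ r = riskWith pi nu rho l}

/-- Total variation distance between distributions on a finite type. -/
noncomputable def tvDist (p q : α → ℝ) : ℝ := (∑ a, |p a - q a|) / 2

end Defs

section Joint
variable {S Y Z : Type*} [Fintype S] [Fintype Y] [Fintype Z]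

noncomputable def margSY (P : S × Y × Z → ℝ) : S × Y → ℝ := fun p => ∑ z, P (p.1, p.2, z)
noncomputable def margSZ (P : S × Y × Z → ℝ) : S × Z → ℝ := fun p => ∑ y, P (p.1, y, p.2)
noncomputable def margYZ (P : S × Y × Z → ℝ) : Y × Z → ℝ := fun p => ∑ s, P (s, p.1, p.2)
noncomputable def margS (P : S × Y × Z → ℝ) : S → ℝ := fun s => ∑ y, ∑ z, P (s, y, z)
noncomputable def margY (P : S × Y × Z → ℝ) : Y → ℝ := fun y => ∑ s, ∑ z, P (s, y, z)
noncomputable def margZ (P : S × Y × Z → ℝ) : Z → ℝ := fun z => ∑ s, ∑ y, P (s, y, z)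

/-- Mutual information `I(S;Y)` (base 2) of the (S,Y)-marginal of `P`. -/
noncomputable def miSY (P : S × Y × Z → ℝ) : ℝ :=
  ∑ s, ∑ y, margSY P (s, y) * Real.logb 2 (margSY P (s, y) / (margS P s * margY P y))

/-- Mutual information `I(S;Z)` (base 2) of the (S,Z)-marginal of `P`. -/
noncomputable def miSZ (P : S × Y × Z → ℝ) : ℝ :=
  ∑ s, ∑ z, margSZ P (s, z) * Real.logb 2 (margSZ P (s, z) / (margS P s * margZ P z))

/-- Conditional mutual information `I(S;Y|Z)` (base 2) under `P`. -/
noncomputable def condMI (P : S × Y × Z → ℝ) : ℝ :=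
  ∑ s, ∑ y, ∑ z,
    P (s, y, z) * Real.logb 2 (P (s, y, z) * margZ P z / (margSZ P (s, z) * margYZ P (y, z)))

/-- The feasible set `Δ_P`: joint distributions with the same (S,Y)- and (S,Z)-marginals as `P`. -/
def marginalPolytope (P : S × Y × Z → ℝ) : Set (S × Y × Z → ℝ) :=
  {Q | IsDist Q ∧ margSY Q = margSY P ∧ margSZ Q = margSZ P}

/-- Minimum-synergy unique information `UI(S;Y\Z) = inf_{Q ∈ Δ_P} I_Q(S;Y|Z)`. -/
noncomputable def UI (P : S × Y × Z → ℝ) : ℝ :=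
  sInf (condMI '' marginalPolytope P)

noncomputable def condYgivenS (P : S × Y × Z → ℝ) : S → Y → ℝ :=
  fun s y => margSY P (s, y) / margS P s
noncomputable def condZgivenS (P : S × Y × Z → ℝ) : S → Z → ℝ :=
  fun s z => margSZ P (s, z) / margS P s
noncomputable def condSgivenY (P : S × Y × Z → ℝ) : Y → S → ℝ :=
  fun y s => margSY P (s, y) / margY P y
noncomputable def condSgivenZ (P : S × Y × Z → ℝ) : Z → S → ℝ :=
  fun z s => margSZ P (s, z) / margZ P z

/-- Weighted input deficiency `δ_i^π(μ̄,κ̄) = inf_{λ̄} ∑_y π_Y(y) D(κ̄_y ∥ (μ̄∘λ̄)_y)`. -/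
noncomputable def defIn {Y' Z' S' : Type*} [Fintype Y'] [Fintype Z'] [Fintype S']
    (piY : Y' → ℝ) (mub : Z' → S' → ℝ) (kab : Y' → S' → ℝ) : ℝ :=
  sInf {d | ∃ lb : Y' → Z' → ℝ, IsChannel lb ∧
    d = ∑ y, piY y * klDiv2 (kab y) (chComp mub lb y)}

end Joint


section Aux
open Finset Real

set_option linter.unusedSectionVars false

/-- Gibbs' inequality with equality case. -/
lemma gibbs_aux {ι : Type*} [Fintype ι] (a b : ι → ℝ)
    (ha : ∀ i, 0 ≤ a i) (hb : ∀ i, 0 ≤ b i)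
    (hd : ∀ i, b i = 0 → a i = 0) (hab : ∑ i, a i = ∑ i, b i) :
    0 ≤ ∑ i, a i * Real.log (a i / b i) ∧
      (∑ i, a i * Real.log (a i / b i) = 0 → ∀ i, a i = b i) := by
  set g : ι → ℝ := fun i => a i * Real.log (a i / b i) - (a i - b i) with hg
  have key : ∀ i, 0 ≤ g i ∧ (g i = 0 → a i = b i) := by
    intro i
    rcases eq_or_lt_of_le (ha i) with h0 | hpos
    · constructor
      · simp [hg, ← h0, hb i]
      · intro h; simp [hg, ← h0] at h; simp [← h0, h]
    · have hbpos : 0 < b i := by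
        rcases eq_or_lt_of_le (hb i) with h0 | h; · exact absurd (hd i h0.symm) (by linarith)
        · exact h
      have ht : 0 < b i / a i := div_pos hbpos hpos
      have hlog : Real.log (b i / a i) ≤ b i / a i - 1 := Real.log_le_sub_one_of_pos ht
      have hrev : Real.log (a i / b i) = - Real.log (b i / a i) := by
        rw [← Real.log_inv]; congr 1; field_simp
      have hgi : g i = a i * (-(Real.log (b i / a i)) - 1 + b i / a i) := by
        simp only [hg, hrev]; field_simp; ring
      constructor
      · rw [hgi]; apply mul_nonneg hpos.le; linarith
      · intro h
        rw [hgi] at h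
        have h2 : -(Real.log (b i / a i)) - 1 + b i / a i = 0 := by
          rcases mul_eq_zero.1 h with h' | h'; · exact absurd h' (ne_of_gt hpos)
          · exact h'
        by_contra hne
        have hne' : b i / a i ≠ 1 := by
          intro h1
          apply hne
          field_simp at h1
          linarith
        have := Real.log_lt_sub_one_of_pos ht hne'
        linarith
  have hsum : ∑ i, g i = ∑ i, a i * Real.log (a i / b i) := by
    simp only [hg, Finset.sum_sub_distrib]
    rw [hab]
    ring
  constructor
  · rw [← hsum]
    exact Finset.sum_nonneg fun i _ => (key i).1
  · intro h i
    have hz : ∀ j ∈ Finset.univ, g j = 0 := by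
      rw [← Finset.sum_eq_zero_iff_of_nonneg (fun j _ => (key j).1)]
      rw [hsum, h]
    exact (key i).2 (hz i (Finset.mem_univ i))

section CMI
variable {S Y Z : Type*} [Fintype S] [Fintype Y] [Fintype Z]

lemma sum_triple_zsy (f : S × Y × Z → ℝ) :
    ∑ x : S × Y × Z, f x = ∑ z, ∑ s, ∑ y, f (s, y, z) := by
  rw [Fintype.sum_prod_type]
  simp only [Fintype.sum_prod_type]
  have h : ∀ s, ∑ y, ∑ z, f (s, y, z) = ∑ z, ∑ y, f (s, y, z) := fun s => Finset.sum_comm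
  simp only [h]
  exact Finset.sum_comm

lemma sum_triple_szy (f : S × Y × Z → ℝ) :
    ∑ x : S × Y × Z, f x = ∑ s, ∑ z, ∑ y, f (s, y, z) := by
  rw [Fintype.sum_prod_type]
  simp only [Fintype.sum_prod_type]
  congr 1
  ext s
  exact Finset.sum_comm

lemma sum_triple_yzs (f : S × Y × Z → ℝ) :
    ∑ x : S × Y × Z, f x = ∑ y, ∑ z, ∑ s, f (s, y, z) := by
  rw [sum_triple_zsy]
  have h : ∀ z, ∑ s, ∑ y, f (s, y, z) = ∑ y, ∑ s, f (s, y, z) := fun z => Finset.sum_comm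
  simp only [h]
  exact Finset.sum_comm

lemma margZ_eq_sum_margSZ (Q : S × Y × Z → ℝ) (z : Z) :
    margZ Q z = ∑ s, margSZ Q (s, z) := rfl

lemma margZ_eq_sum_margYZ (Q : S × Y × Z → ℝ) (z : Z) :
    margZ Q z = ∑ y, margYZ Q (y, z) := by
  simp only [margZ, margYZ]
  exact Finset.sum_comm

lemma margSZ_nonneg {Q : S × Y × Z → ℝ} (hQ : ∀ x, 0 ≤ Q x) (s : S) (z : Z) :
    0 ≤ margSZ Q (s, z) := Finset.sum_nonneg fun _ _ => hQ _

lemma margYZ_nonneg {Q : S × Y × Z → ℝ} (hQ : ∀ x, 0 ≤ Q x) (y : Y) (z : Z) :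
    0 ≤ margYZ Q (y, z) := Finset.sum_nonneg fun _ _ => hQ _

lemma margZ_nonneg {Q : S × Y × Z → ℝ} (hQ : ∀ x, 0 ≤ Q x) (z : Z) :
    0 ≤ margZ Q z := Finset.sum_nonneg fun _ _ => Finset.sum_nonneg fun _ _ => hQ _

lemma le_margSZ {Q : S × Y × Z → ℝ} (hQ : ∀ x, 0 ≤ Q x) (s : S) (y : Y) (z : Z) :
    Q (s, y, z) ≤ margSZ Q (s, z) :=
  Finset.single_le_sum (fun y _ => hQ (s, y, z)) (Finset.mem_univ y)

lemma le_margYZ {Q : S × Y × Z → ℝ} (hQ : ∀ x, 0 ≤ Q x) (s : S) (y : Y) (z : Z) :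
    Q (s, y, z) ≤ margYZ Q (y, z) :=
  Finset.single_le_sum (fun s _ => hQ (s, y, z)) (Finset.mem_univ s)

lemma margSZ_le_margZ {Q : S × Y × Z → ℝ} (hQ : ∀ x, 0 ≤ Q x) (s : S) (z : Z) :
    margSZ Q (s, z) ≤ margZ Q z := by
  rw [margZ_eq_sum_margSZ]
  exact Finset.single_le_sum (fun s _ => margSZ_nonneg hQ s z) (Finset.mem_univ s)

lemma margYZ_le_margZ {Q : S × Y × Z → ℝ} (hQ : ∀ x, 0 ≤ Q x) (y : Y) (z : Z) :
    margYZ Q (y, z) ≤ margZ Q z := by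
  rw [margZ_eq_sum_margYZ]
  exact Finset.single_le_sum (fun y _ => margYZ_nonneg hQ y z) (Finset.mem_univ y)

lemma pos_of_entry_pos {Q : S × Y × Z → ℝ} (hQ : ∀ x, 0 ≤ Q x) {s : S} {y : Y} {z : Z}
    (h : 0 < Q (s, y, z)) :
    0 < margSZ Q (s, z) ∧ 0 < margYZ Q (y, z) ∧ 0 < margZ Q z :=
  ⟨lt_of_lt_of_le h (le_margSZ hQ s y z), lt_of_lt_of_le h (le_margYZ hQ s y z),
    lt_of_lt_of_le (lt_of_lt_of_le h (le_margSZ hQ s y z)) (margSZ_le_margZ hQ s z)⟩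

/-- The Markov "product" reference measure. -/
noncomputable def refB (Q : S × Y × Z → ℝ) : S × Y × Z → ℝ :=
  fun x => margSZ Q (x.1, x.2.2) * margYZ Q (x.2.1, x.2.2) / margZ Q x.2.2

lemma refB_nonneg {Q : S × Y × Z → ℝ} (hQ : ∀ x, 0 ≤ Q x) (x : S × Y × Z) :
    0 ≤ refB Q x :=
  div_nonneg (mul_nonneg (margSZ_nonneg hQ _ _) (margYZ_nonneg hQ _ _)) (margZ_nonneg hQ _)

lemma refB_dom {Q : S × Y × Z → ℝ} (hQ : ∀ x, 0 ≤ Q x) (x : S × Y × Z)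
    (h : refB Q x = 0) : Q x = 0 := by
  obtain ⟨s, y, z⟩ := x
  by_contra hne
  have hpos : 0 < Q (s, y, z) := lt_of_le_of_ne (hQ _) (Ne.symm hne)
  obtain ⟨h1, h2, h3⟩ := pos_of_entry_pos hQ hpos
  have : 0 < refB Q (s, y, z) := div_pos (mul_pos h1 h2) h3
  linarith

lemma refB_sum {Q : S × Y × Z → ℝ} (hQ : ∀ x, 0 ≤ Q x) :
    ∑ x : S × Y × Z, refB Q x = ∑ x : S × Y × Z, Q x := by
  rw [sum_triple_zsy (refB Q), sum_triple_zsy Q]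
  refine Finset.sum_congr rfl fun z _ => ?_
  have h2 : ∑ s, ∑ y, Q (s, y, z) = margZ Q z := rfl
  rw [h2]
  have h1 : ∑ s, ∑ y, refB Q (s, y, z)
      = (∑ s, margSZ Q (s, z)) * (∑ y, margYZ Q (y, z)) / margZ Q z := by
    simp only [refB, Finset.sum_mul, Finset.mul_sum, Finset.sum_div]
    exact Finset.sum_comm
  rw [h1, ← margZ_eq_sum_margSZ, ← margZ_eq_sum_margYZ]
  rcases eq_or_lt_of_le (margZ_nonneg hQ z) with h0 | h0
  · rw [← h0]; simp
  · field_simp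

lemma condMI_pointwise {Q : S × Y × Z → ℝ} (hQ : ∀ x, 0 ≤ Q x) (s : S) (y : Y) (z : Z) :
    Q (s, y, z) * Real.logb 2
        (Q (s, y, z) * margZ Q z / (margSZ Q (s, z) * margYZ Q (y, z)))
      = Q (s, y, z) * Real.log (Q (s, y, z) / refB Q (s, y, z)) / Real.log 2 := by
  rcases eq_or_lt_of_le (hQ (s, y, z)) with h0 | hpos
  · rw [← h0]; simp
  · obtain ⟨h1, h2, h3⟩ := pos_of_entry_pos hQ hpos
    have harg : Q (s, y, z) / refB Q (s, y, z)
        = Q (s, y, z) * margZ Q z / (margSZ Q (s, z) * margYZ Q (y, z)) := by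
      simp only [refB]
      rw [div_div_eq_mul_div]
    rw [← harg, Real.logb, mul_div_assoc]

lemma triple_comm (f : S → Y → Z → ℝ) :
    ∑ s, ∑ y, ∑ z, f s y z = ∑ z, ∑ s, ∑ y, f s y z := by
  have h : ∀ s, ∑ y, ∑ z, f s y z = ∑ z, ∑ y, f s y z := fun s => Finset.sum_comm
  simp only [h]
  exact Finset.sum_comm

lemma condMI_eq_klSum {Q : S × Y × Z → ℝ} (hQ : ∀ x, 0 ≤ Q x) :
    condMI Q = (∑ x : S × Y × Z, Q x * Real.log (Q x / refB Q x)) / Real.log 2 := by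
  have e : (∑ x : S × Y × Z, Q x * Real.log (Q x / refB Q x)) / Real.log 2
      = ∑ z, ∑ s, ∑ y, Q (s, y, z) * Real.log (Q (s, y, z) / refB Q (s, y, z)) / Real.log 2 := by
    rw [sum_triple_zsy]
    simp only [Finset.sum_div]
  rw [e]
  unfold condMI
  rw [triple_comm]
  exact Finset.sum_congr rfl fun z _ => Finset.sum_congr rfl fun s _ =>
    Finset.sum_congr rfl fun y _ => condMI_pointwise hQ s y z

lemma condMI_nonneg_and_markov (Q : S × Y × Z → ℝ) (hQ : IsDist Q) :
    0 ≤ condMI Q ∧ (condMI Q = 0 →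
      ∀ s y z, Q (s, y, z) * margZ Q z = margSZ Q (s, z) * margYZ Q (y, z)) := by
  obtain ⟨hQ0, _⟩ := hQ
  have hg := gibbs_aux Q (refB Q) hQ0 (refB_nonneg hQ0) (refB_dom hQ0) (refB_sum hQ0).symm
  have hlog2 : (0 : ℝ) < Real.log 2 := Real.log_pos one_lt_two
  rw [condMI_eq_klSum hQ0]
  constructor
  · exact div_nonneg hg.1 hlog2.le
  · intro h
    have hT : ∑ x : S × Y × Z, Q x * Real.log (Q x / refB Q x) = 0 := by
      rcases div_eq_zero_iff.1 h with h' | h'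
      · exact h'
      · exact absurd h' (ne_of_gt hlog2)
    have heq := hg.2 hT
    intro s y z
    have hx := heq (s, y, z)
    rcases eq_or_lt_of_le (margZ_nonneg hQ0 z) with h0 | h0
    · have hq0 : Q (s, y, z) = 0 := le_antisymm
        (le_trans (le_trans (le_margSZ hQ0 s y z) (margSZ_le_margZ hQ0 s z)) h0.ge)
        (hQ0 _)
      have hsz : margSZ Q (s, z) = 0 := le_antisymm
        (le_trans (margSZ_le_margZ hQ0 s z) h0.ge) (margSZ_nonneg hQ0 s z)
      rw [hq0, hsz]
      ring
    · rw [hx]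
      simp only [refB]
      field_simp

/-- Continuous extension of `condMI` via entropy decomposition. -/
noncomputable def cmiG (Q : S × Y × Z → ℝ) : ℝ :=
  ((∑ x : S × Y × Z, Q x * Real.log (Q x)) + (∑ z, margZ Q z * Real.log (margZ Q z))
    - (∑ p : S × Z, margSZ Q p * Real.log (margSZ Q p))
    - (∑ p : Y × Z, margYZ Q p * Real.log (margYZ Q p))) / Real.log 2

lemma condMI_eq_cmiG {Q : S × Y × Z → ℝ} (hQ : ∀ x, 0 ≤ Q x) :
    condMI Q = cmiG Q := by
  rw [condMI_eq_klSum hQ]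
  unfold cmiG
  congr 1
  have hpt : ∀ x : S × Y × Z, Q x * Real.log (Q x / refB Q x)
      = Q x * Real.log (Q x) + Q x * Real.log (margZ Q x.2.2)
        - Q x * Real.log (margSZ Q (x.1, x.2.2)) - Q x * Real.log (margYZ Q (x.2.1, x.2.2)) := by
    rintro ⟨s, y, z⟩
    rcases eq_or_lt_of_le (hQ (s, y, z)) with h0 | hpos
    · rw [← h0]; ring
    · obtain ⟨h1, h2, h3⟩ := pos_of_entry_pos hQ hpos
      have harg : Q (s, y, z) / refB Q (s, y, z)
          = Q (s, y, z) * margZ Q z / (margSZ Q (s, z) * margYZ Q (y, z)) := by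
        simp only [refB]
        rw [div_div_eq_mul_div]
      rw [harg, Real.log_div (by positivity) (by positivity),
        Real.log_mul (ne_of_gt hpos) (ne_of_gt h3), Real.log_mul (ne_of_gt h1) (ne_of_gt h2)]
      ring
  simp only [hpt]
  rw [Finset.sum_sub_distrib, Finset.sum_sub_distrib, Finset.sum_add_distrib]
  have e1 : ∑ x : S × Y × Z, Q x * Real.log (margZ Q x.2.2)
      = ∑ z, margZ Q z * Real.log (margZ Q z) := by
    rw [sum_triple_zsy (fun x => Q x * Real.log (margZ Q x.2.2))]
    refine Finset.sum_congr rfl fun z _ => ?_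
    simp only [← Finset.sum_mul]
    rfl
  have e2 : ∑ x : S × Y × Z, Q x * Real.log (margSZ Q (x.1, x.2.2))
      = ∑ p : S × Z, margSZ Q p * Real.log (margSZ Q p) := by
    rw [sum_triple_szy (fun x => Q x * Real.log (margSZ Q (x.1, x.2.2))),
      Fintype.sum_prod_type]
    refine Finset.sum_congr rfl fun s _ => Finset.sum_congr rfl fun z _ => ?_
    simp only [← Finset.sum_mul]
    rfl
  have e3 : ∑ x : S × Y × Z, Q x * Real.log (margYZ Q (x.2.1, x.2.2))
      = ∑ p : Y × Z, margYZ Q p * Real.log (margYZ Q p) := by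
    rw [sum_triple_yzs (fun x => Q x * Real.log (margYZ Q (x.2.1, x.2.2))),
      Fintype.sum_prod_type]
    refine Finset.sum_congr rfl fun y _ => Finset.sum_congr rfl fun z _ => ?_
    simp only [← Finset.sum_mul]
    rfl
  rw [e1, e2, e3]

lemma continuous_cmiG : Continuous (cmiG : (S × Y × Z → ℝ) → ℝ) := by
  have cphi : Continuous (fun t : ℝ => t * Real.log t) := Real.continuous_mul_log
  apply Continuous.div_const
  have hmZ : ∀ z : Z, Continuous (fun Q : S × Y × Z → ℝ => margZ Q z) := fun z =>
    continuous_finset_sum _ fun s _ => continuous_finset_sum _ fun y _ => continuous_apply _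
  have hmSZ : ∀ p : S × Z, Continuous (fun Q : S × Y × Z → ℝ => margSZ Q p) := fun p =>
    continuous_finset_sum _ fun y _ => continuous_apply _
  have hmYZ : ∀ p : Y × Z, Continuous (fun Q : S × Y × Z → ℝ => margYZ Q p) := fun p =>
    continuous_finset_sum _ fun s _ => continuous_apply _
  refine Continuous.sub (Continuous.sub (Continuous.add ?_ ?_) ?_) ?_
  · exact continuous_finset_sum _ fun x _ => cphi.comp (continuous_apply x)
  · exact continuous_finset_sum _ fun z _ => cphi.comp (hmZ z)
  · exact continuous_finset_sum _ fun p _ => cphi.comp (hmSZ p)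
  · exact continuous_finset_sum _ fun p _ => cphi.comp (hmYZ p)

lemma polytope_isCompact (P : S × Y × Z → ℝ) : IsCompact (marginalPolytope P) := by
  have hclosed : IsClosed (marginalPolytope P) := by
    have hrep : marginalPolytope P =
        (⋂ x : S × Y × Z, {Q : S × Y × Z → ℝ | 0 ≤ Q x}) ∩
        ({Q : S × Y × Z → ℝ | ∑ x, Q x = 1} ∩
          ((⋂ p : S × Y, {Q : S × Y × Z → ℝ | margSY Q p = margSY P p}) ∩
            (⋂ p : S × Z, {Q : S × Y × Z → ℝ | margSZ Q p = margSZ P p}))) := by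
      ext Q
      simp only [marginalPolytope, IsDist, Set.mem_setOf_eq, Set.mem_inter_iff,
        Set.mem_iInter, Set.mem_setOf_eq, funext_iff]
      tauto
    rw [hrep]
    refine IsClosed.inter (isClosed_iInter fun x =>
        isClosed_le continuous_const (continuous_apply x)) (IsClosed.inter ?_ (IsClosed.inter ?_ ?_))
    · exact isClosed_eq (continuous_finset_sum _ fun x _ => continuous_apply x) continuous_const
    · exact isClosed_iInter fun p => isClosed_eq
        (continuous_finset_sum _ fun z _ => continuous_apply _) continuous_const
    · exact isClosed_iInter fun p => isClosed_eq
        (continuous_finset_sum _ fun y _ => continuous_apply _) continuous_const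
  have hsub : marginalPolytope P ⊆ Set.pi Set.univ (fun _ : S × Y × Z => Set.Icc (0:ℝ) 1) := by
    rintro Q ⟨⟨hQ0, hQ1⟩, -, -⟩ x -
    refine ⟨hQ0 x, ?_⟩
    calc Q x ≤ ∑ x', Q x' := Finset.single_le_sum (fun x' _ => hQ0 x') (Finset.mem_univ x)
    _ = 1 := hQ1
  exact IsCompact.of_isClosed_subset
    (isCompact_univ_pi fun _ => isCompact_Icc) hclosed hsub

end CMI
end Aux

/-- `UI` vanishes iff `Y` is a degradation of `Z` with respect to `S`. -/
theorem UI_eq_zero_iff_degradation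
    {S Y Z : Type*} [Fintype S] [Fintype Y] [Fintype Z]
    [Nonempty S] [Nonempty Y] [Nonempty Z]
    (P : S × Y × Z → ℝ) (hP : IsDist P) (hfull : ∀ s, 0 < margS P s) :
    UI P = 0 ↔ ∃ lam : Z → Y → ℝ, IsChannel lam ∧
      ∀ s y, condYgivenS P s y = chComp lam (condZgivenS P) s y := by
  classical
  have hP0 := hP.1
  constructor
  · -- forward: UI = 0 → degradation
    intro h
    have hne : (marginalPolytope P).Nonempty := ⟨P, hP, rfl, rfl⟩
    have hcont : ContinuousOn condMI (marginalPolytope P) :=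
      (continuous_cmiG.continuousOn).congr fun Q hQ => condMI_eq_cmiG hQ.1.1
    have himage : IsCompact (condMI '' marginalPolytope P) :=
      (polytope_isCompact P).image_of_continuousOn hcont
    have hmem : sInf (condMI '' marginalPolytope P) ∈ condMI '' marginalPolytope P :=
      himage.sInf_mem (hne.image _)
    rw [show sInf (condMI '' marginalPolytope P) = UI P from rfl, h] at hmem
    obtain ⟨Q, hQmem, hQ0⟩ := hmem
    obtain ⟨hQdist, hQSY, hQSZ⟩ := hQmem
    have hQnn := hQdist.1
    have markov := (condMI_nonneg_and_markov Q hQdist).2 hQ0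
    set lam : Z → Y → ℝ := fun z y =>
      if 0 < margZ Q z then margYZ Q (y, z) / margZ Q z else (Fintype.card Y : ℝ)⁻¹ with hlam
    refine ⟨lam, ?_, ?_⟩
    · intro z
      by_cases hz : 0 < margZ Q z
      · constructor
        · intro y
          simp only [hlam, if_pos hz]
          exact div_nonneg (margYZ_nonneg hQnn y z) hz.le
        · simp only [hlam, if_pos hz]
          rw [← Finset.sum_div, ← margZ_eq_sum_margYZ]
          field_simp
      · constructor
        · intro y
          simp only [hlam, if_neg hz]
          positivity
        · simp only [hlam, if_neg hz]
          rw [Finset.sum_const, Finset.card_univ, nsmul_eq_mul]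
          rw [mul_inv_cancel₀]
          exact_mod_cast Fintype.card_ne_zero
    · intro s y
      have hkey : ∀ z, Q (s, y, z) = lam z y * margSZ Q (s, z) := by
        intro z
        by_cases hz : 0 < margZ Q z
        · simp only [hlam, if_pos hz]
          have := markov s y z
          field_simp
          linarith [markov s y z]
        · have hz0 : margZ Q z = 0 := le_antisymm (not_lt.1 hz) (margZ_nonneg hQnn z)
          have hq0 : Q (s, y, z) = 0 := le_antisymm
            (le_trans (le_trans (le_margSZ hQnn s y z) (margSZ_le_margZ hQnn s z)) hz0.le)
            (hQnn _)
          have hsz : margSZ Q (s, z) = 0 := le_antisymm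
            (le_trans (margSZ_le_margZ hQnn s z) hz0.le) (margSZ_nonneg hQnn s z)
          rw [hq0, hsz, mul_zero]
      have hSY : margSY P (s, y) = ∑ z, lam z y * margSZ P (s, z) := by
        rw [← congrFun hQSY (s, y)]
        show (∑ z, Q (s, y, z)) = _
        refine Finset.sum_congr rfl fun z _ => ?_
        rw [hkey z, congrFun hQSZ (s, z)]
      have hs := (hfull s).ne'
      simp only [condYgivenS, chComp, condZgivenS]
      rw [hSY, Finset.sum_div]
      refine Finset.sum_congr rfl fun z _ => ?_
      rw [mul_div_assoc]
  · -- backward: degradation → UI = 0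
    rintro ⟨lam, hlam, hdeg⟩
    set Q : S × Y × Z → ℝ := fun x => lam x.2.2 x.2.1 * margSZ P (x.1, x.2.2) with hQdef
    have hQnn : ∀ x, (0:ℝ) ≤ Q x := fun x =>
      mul_nonneg ((hlam _).1 _) (margSZ_nonneg hP0 _ _)
    have hrowsum : ∀ z, ∑ y, lam z y = 1 := fun z => (hlam z).2
    have hmSZ : margSZ Q = margSZ P := by
      funext p
      obtain ⟨s, z⟩ := p
      show (∑ y, lam z y * margSZ P (s, z)) = _
      rw [← Finset.sum_mul, hrowsum z, one_mul]
    have hmSY : margSY Q = margSY P := by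
      funext p
      obtain ⟨s, y⟩ := p
      have hs := (hfull s).ne'
      have h := hdeg s y
      simp only [condYgivenS, chComp, condZgivenS] at h
      have h2 : ∑ z, lam z y * (margSZ P (s, z) / margS P s)
          = (∑ z, lam z y * margSZ P (s, z)) / margS P s := by
        rw [Finset.sum_div]
        exact Finset.sum_congr rfl fun z _ => (mul_div_assoc _ _ _).symm
      rw [h2] at h
      have h3 : margSY P (s, y) = ∑ z, lam z y * margSZ P (s, z) := by
        have := congrArg (fun t => t * margS P s) h
        simpa [div_mul_cancel₀, hs] using this
      show (∑ z, Q (s, y, z)) = _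
      rw [h3]
    have hQsum : ∑ x : S × Y × Z, Q x = 1 := by
      rw [sum_triple_szy Q]
      have : ∀ s z, ∑ y, Q (s, y, z) = margSZ P (s, z) := by
        intro s z
        show (∑ y, lam z y * margSZ P (s, z)) = _
        rw [← Finset.sum_mul, hrowsum z, one_mul]
      simp only [this]
      have e : ∑ s, ∑ z, margSZ P (s, z) = ∑ x : S × Y × Z, P x := (sum_triple_szy P).symm
      rw [e]
      exact hP.2
    have hQdist : IsDist Q := ⟨hQnn, hQsum⟩
    have hQmem : Q ∈ marginalPolytope P := ⟨hQdist, hmSY, hmSZ⟩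
    have hmZ : margZ Q = margZ P := by
      funext z
      rw [margZ_eq_sum_margSZ, margZ_eq_sum_margSZ, hmSZ]
    have hmYZ : ∀ y z, margYZ Q (y, z) = lam z y * margZ P z := by
      intro y z
      show (∑ s, lam z y * margSZ P (s, z)) = _
      rw [← Finset.mul_sum, ← margZ_eq_sum_margSZ]
    have hcmi : condMI Q = 0 := by
      unfold condMI
      refine Finset.sum_eq_zero fun s _ => Finset.sum_eq_zero fun y _ =>
        Finset.sum_eq_zero fun z _ => ?_
      rcases eq_or_lt_of_le (hQnn (s, y, z)) with h0 | hpos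
      · rw [← h0, zero_mul]
      · have hlampos : 0 < lam z y := by
          rcases (mul_pos_iff.1 (by rwa [hQdef] at hpos)) with ⟨h1, h2⟩ | ⟨h1, h2⟩
          · exact h1
          · exact absurd (margSZ_nonneg hP0 s z) (not_le.2 h2)
        have hszpos : 0 < margSZ P (s, z) := by
          rcases (mul_pos_iff.1 (by rwa [hQdef] at hpos)) with ⟨h1, h2⟩ | ⟨h1, h2⟩
          · exact h2
          · exact absurd ((hlam z).1 y) (not_le.2 h1)
        have hzpos : 0 < margZ P z := lt_of_lt_of_le hszpos (by
          rw [margZ_eq_sum_margSZ]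
          exact Finset.single_le_sum (fun s' _ => margSZ_nonneg hP0 s' z) (Finset.mem_univ s))
        have harg : Q (s, y, z) * margZ Q z / (margSZ Q (s, z) * margYZ Q (y, z)) = 1 := by
          rw [hmZ, congrFun hmSZ (s, z), hmYZ y z, hQdef]
          field_simp
        rw [harg]
        simp
    have hlb : ∀ r ∈ condMI '' marginalPolytope P, (0:ℝ) ≤ r := by
      rintro r ⟨Q', hQ', rfl⟩
      exact (condMI_nonneg_and_markov Q' hQ'.1).1
    have hmem0 : (0:ℝ) ∈ condMI '' marginalPolytope P := ⟨Q, hQmem, hcmi⟩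
    refine le_antisymm (csInf_le ⟨0, hlb⟩ hmem0) (le_csInf ⟨0, hmem0⟩ hlb)
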